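/- Let F = [[0,−1],[1,0]]. Let a(x) = [A(x), B(x)]ᵀ, x ∈ ℕ, be a sequence of 2×1 real vectors with ∑_{x≥0} ‖a(x)‖² < ∞, and for x ≠ y define K(x,y) = (A(x)B(y) − A(y)B(x))/(x−y) = ⟨F a(x), a(y)⟩/(x−y). Suppose there exist 2×2 real matrices S_x with a(x+1) = S_x a(x) for all x ∈ ℕ, and a constant 2×2 real matrix C such that S_yᵀ F S_x − F = (x−y)·C for all x ≠ y. Suppose further that C has eigenvalues λ ∈ ℝ∖{0} and 0, and let [α,β]ᵀ be a real unit eigenvector of C for the eigenvalue λ. Then, setting φ(x) = |λ|^{1/2}(α A(x) + β B(x)), one has (φ(x)) ∈ ℓ² and K(x,y) = −sgn(λ) ∑_{k=0}^∞ φ(x+k) φ(y+k) for all x,y ∈ ℕ with x ≠ y. -/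

import Mathlib

open Matrix Filter

set_option maxHeartbeats 1000000 in
/-- Theorem 3 of the paper: a discrete Tracy–Widom kernel whose coefficient vectors satisfy a
linear recurrence `a(x+1) = S_x a(x)` with `S_yᵀ F S_x − F = (x−y)·C` for a constant matrix `C`
having eigenvalues `λ ≠ 0` and `0`, is (up to sign) the square of a Hankel matrix, with symbol
`φ(x) = |λ|^{1/2}(α A(x) + β B(x))` for `[α,β]ᵀ` a unit eigenvector of `C` for `λ`. -/
theorem stmt_4 (A B : ℕ → ℝ)
    (ha : Summable fun x : ℕ => (A x) ^ 2 + (B x) ^ 2)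
    (K : ℕ → ℕ → ℝ)
    (hK : ∀ x y : ℕ, x ≠ y → K x y = (A x * B y - A y * B x) / ((x : ℝ) - y))
    (S : ℕ → Matrix (Fin 2) (Fin 2) ℝ)
    (hS : ∀ x : ℕ, ![A (x + 1), B (x + 1)] = (S x).mulVec ![A x, B x])
    (C : Matrix (Fin 2) (Fin 2) ℝ)
    (hC : ∀ x y : ℕ, x ≠ y →
      (S y)ᵀ * !![(0 : ℝ), -1; 1, 0] * (S x) - !![(0 : ℝ), -1; 1, 0]
        = ((x : ℝ) - (y : ℝ)) • C)
    (lam : ℝ) (hlam : lam ≠ 0)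
    (hzero : ∃ v : Fin 2 → ℝ, v ≠ 0 ∧ C.mulVec v = 0)
    (α β : ℝ) (hunit : α ^ 2 + β ^ 2 = 1)
    (heig : C.mulVec ![α, β] = lam • ![α, β]) :
    (Summable fun x : ℕ => (Real.sqrt |lam| * (α * A x + β * B x)) ^ 2)
    ∧ ∀ x y : ℕ, x ≠ y →
        K x y = -(Real.sign lam) *
          ∑' k : ℕ, (Real.sqrt |lam| * (α * A (x + k) + β * B (x + k)))
            * (Real.sqrt |lam| * (α * A (y + k) + β * B (y + k))) := by
  set ψ : ℕ → ℝ := fun x => α * A x + β * B x with hψdef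
  -- summability of ψ²
  have hψsum : Summable fun x : ℕ => ψ x ^ 2 := by
    refine Summable.of_nonneg_of_le (fun x => sq_nonneg _) (fun x => ?_) ha
    simp only [hψdef]
    nlinarith [sq_nonneg (β * A x - α * B x)]
  have hsq : ∀ u : ℝ, (Real.sqrt |lam| * u) ^ 2 = |lam| * u ^ 2 := by
    intro u
    rw [mul_pow, Real.sq_sqrt (abs_nonneg _)]
  have part1 : Summable fun x : ℕ => (Real.sqrt |lam| * (α * A x + β * B x)) ^ 2 := by
    simpa only [hsq] using hψsum.mul_left |lam|
  refine ⟨part1, ?_⟩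
  -- entrywise form of hC
  have hEntry : ∀ x y : ℕ, x ≠ y → ∀ i j : Fin 2,
      S y 1 i * S x 0 j - S y 0 i * S x 1 j - !![(0:ℝ), -1; 1, 0] i j
        = ((x : ℝ) - y) * C i j := by
    intro x y hxy i j
    have h := congrFun (congrFun (hC x y hxy) i) j
    simp only [Matrix.sub_apply, Matrix.smul_apply, smul_eq_mul, Matrix.mul_apply,
      Matrix.transpose_apply, Fin.sum_univ_two] at h
    fin_cases i <;> fin_cases j <;>
      simp only [Matrix.cons_val', Matrix.cons_val_zero, Matrix.cons_val_one,
        Matrix.head_cons, Matrix.head_fin_const, Matrix.empty_val',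
        Matrix.cons_val_fin_one, Matrix.of_apply] at h ⊢ <;> linarith [h]
  -- symmetry of C
  have hsym : C 0 1 = C 1 0 := by
    have e1 := hEntry 1 0 (by norm_num) 0 1
    have e2 := hEntry 0 1 (by norm_num) 1 0
    simp only [Matrix.cons_val', Matrix.cons_val_zero, Matrix.cons_val_one,
      Matrix.head_cons, Matrix.vecHead, Matrix.empty_val', Matrix.cons_val_fin_one,
      Matrix.of_apply, Nat.cast_one, Nat.cast_zero] at e1 e2
    linarith
  -- eigen equations
  have h1 : C 0 0 * α + C 0 1 * β = lam * α := by
    have h := congrFun heig 0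
    simp [Matrix.mulVec, dotProduct, Fin.sum_univ_two] at h
    linarith
  have h2 : C 1 0 * α + C 1 1 * β = lam * β := by
    have h := congrFun heig 1
    simp [Matrix.mulVec, dotProduct, Fin.sum_univ_two] at h
    linarith
  -- determinant zero
  have hdet : C 0 0 * C 1 1 - C 0 1 * C 1 0 = 0 := by
    obtain ⟨v, hv0, hv⟩ := hzero
    have k0 : C 0 0 * v 0 + C 0 1 * v 1 = 0 := by
      have h := congrFun hv 0
      simp [Matrix.mulVec, dotProduct, Fin.sum_univ_two] at h
      linarith
    have k1 : C 1 0 * v 0 + C 1 1 * v 1 = 0 := by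
      have h := congrFun hv 1
      simp [Matrix.mulVec, dotProduct, Fin.sum_univ_two] at h
      linarith
    obtain ⟨i, hi⟩ := Function.ne_iff.mp hv0
    fin_cases i
    · have : (C 0 0 * C 1 1 - C 0 1 * C 1 0) * v 0 = 0 := by linear_combination C 1 1 * k0 - C 0 1 * k1
      rcases mul_eq_zero.mp this with h | h
      · exact h
      · exact absurd h hi
    · have : (C 0 0 * C 1 1 - C 0 1 * C 1 0) * v 1 = 0 := by linear_combination C 0 0 * k1 - C 1 0 * k0
      rcases mul_eq_zero.mp this with h | h
      · exact h
      · exact absurd h hi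
  -- identify C = lam • vvᵀ
  have h2' : C 0 1 * α + C 1 1 * β = lam * β := by rw [hsym]; exact h2
  have hpq1 : α * (C 0 1 * α - C 0 0 * β) + β * (C 1 1 * α - C 0 1 * β) = 0 := by
    linear_combination α * h2' - β * h1
  have hlamq : C 0 0 * C 1 1 - C 0 1 ^ 2
      = lam * (α * (C 1 1 * α - C 0 1 * β) - β * (C 0 1 * α - C 0 0 * β)) := by
    linear_combination (C 1 1 * α - C 0 1 * β) * h1 - (C 0 1 * α - C 0 0 * β) * h2'
      - (C 0 0 * C 1 1 - C 0 1 ^ 2) * hunit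
  have hpq2 : α * (C 1 1 * α - C 0 1 * β) - β * (C 0 1 * α - C 0 0 * β) = 0 := by
    have hd2 : C 0 0 * C 1 1 - C 0 1 ^ 2 = 0 := by
      rw [sq]; linear_combination hdet - C 0 1 * hsym
    have := hlamq
    rw [hd2] at this
    rcases mul_eq_zero.mp this.symm with h | h
    · exact absurd h hlam
    · exact h
  have hp0 : C 0 1 * α - C 0 0 * β = 0 := by
    linear_combination α * hpq1 - β * hpq2 - (C 0 1 * α - C 0 0 * β) * hunit
  have hq0 : C 1 1 * α - C 0 1 * β = 0 := by
    linear_combination β * hpq1 + α * hpq2 - (C 1 1 * α - C 0 1 * β) * hunit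
  have hc : C 0 0 = lam * α ^ 2 := by
    linear_combination α * h1 - β * hp0 - C 0 0 * hunit
  have hd : C 0 1 = lam * (α * β) := by
    linear_combination β * h1 + α * hp0 - C 0 1 * hunit
  have he : C 1 1 = lam * β ^ 2 := by
    linear_combination β * h2' + α * hq0 - C 1 1 * hunit
  have hd' : C 1 0 = lam * (α * β) := by rw [← hsym]; exact hd
  -- scalar recurrence relations
  have hSA : ∀ x : ℕ, A (x + 1) = S x 0 0 * A x + S x 0 1 * B x := by
    intro x
    have h := congrFun (hS x) 0
    simpa [Matrix.mulVec, dotProduct, Fin.sum_univ_two] using h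
  have hSB : ∀ x : ℕ, B (x + 1) = S x 1 0 * A x + S x 1 1 * B x := by
    intro x
    have h := congrFun (hS x) 1
    simpa [Matrix.mulVec, dotProduct, Fin.sum_univ_two] using h
  -- the key recurrence for the numerator
  have hN : ∀ x y : ℕ, x ≠ y →
      A (x + 1) * B (y + 1) - A (y + 1) * B (x + 1)
        = (A x * B y - A y * B x) + ((x : ℝ) - y) * (lam * ψ x * ψ y) := by
    intro x y hxy
    have E00 := hEntry x y hxy 0 0
    have E01 := hEntry x y hxy 0 1
    have E10 := hEntry x y hxy 1 0
    have E11 := hEntry x y hxy 1 1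
    simp only [Matrix.cons_val', Matrix.cons_val_zero, Matrix.cons_val_one,
      Matrix.head_cons, Matrix.empty_val', Matrix.cons_val_fin_one,
      Matrix.vecHead, Matrix.of_apply] at E00 E01 E10 E11
    rw [hSA x, hSB x, hSA y, hSB y, hψdef]
    simp only
    linear_combination A x * A y * E00 + A x * B y * E10 + B x * A y * E01
      + B x * B y * E11 + ((x : ℝ) - y) * (A x * A y * hc + A x * B y * hd'
      + B x * A y * hd + B x * B y * he)
  -- telescoping
  have hTel : ∀ x y : ℕ, x ≠ y → ∀ n : ℕ,
      A x * B y - A y * B x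
        = (A (x + n) * B (y + n) - A (y + n) * B (x + n))
          - ((x : ℝ) - y) * lam * ∑ k ∈ Finset.range n, ψ (x + k) * ψ (y + k) := by
    intro x y hxy n
    induction n with
    | zero => simp
    | succ n ih =>
      have hne : x + n ≠ y + n := by omega
      have h := hN (x + n) (y + n) hne
      have hcast : ((x + n : ℕ) : ℝ) - ((y + n : ℕ) : ℝ) = (x : ℝ) - y := by
        push_cast; ring
      rw [hcast] at h
      rw [Finset.sum_range_succ]
      simp only [show x + (n + 1) = x + n + 1 from rfl, show y + (n + 1) = y + n + 1 from rfl]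
      linear_combination ih - h
  intro x y hxy
  have hxyr : (x : ℝ) - y ≠ 0 := by
    have : (x : ℝ) ≠ y := by exact_mod_cast hxy
    exact sub_ne_zero.mpr this
  -- limit of numerator along the diagonal
  have hg0 : Tendsto (fun n : ℕ => A n ^ 2 + B n ^ 2) atTop (nhds 0) :=
    ha.tendsto_atTop_zero
  have hshift : ∀ m : ℕ, Tendsto (fun n : ℕ => A (m + n) ^ 2 + B (m + n) ^ 2) atTop (nhds 0) := by
    intro m
    have := hg0.comp (tendsto_add_atTop_nat m)
    simpa [add_comm, Function.comp_def] using this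
  have key : ∀ u v w z : ℝ, |u * v - w * z| ≤ (u ^ 2 + z ^ 2) + (w ^ 2 + v ^ 2) := by
    intro u v w z
    refine (abs_sub _ _).trans ?_
    rw [abs_mul, abs_mul]
    nlinarith [sq_nonneg (|u| - |v|), sq_nonneg (|w| - |z|), sq_abs u, sq_abs v, sq_abs w,
      sq_abs z]
  have hprod : ∀ u v : ℝ, |u * v| ≤ 1 / 2 * (u ^ 2 + v ^ 2) := by
    intro u v
    rw [abs_mul]
    nlinarith [sq_nonneg (|u| - |v|), sq_abs u, sq_abs v]
  have hNlim : Tendsto (fun n : ℕ => A (x + n) * B (y + n) - A (y + n) * B (x + n))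
      atTop (nhds 0) := by
    have hb : Tendsto (fun n : ℕ => (A (x+n)^2 + B (x+n)^2) + (A (y+n)^2 + B (y+n)^2))
        atTop (nhds 0) := by
      simpa using (hshift x).add (hshift y)
    refine squeeze_zero_norm (fun n => ?_) hb
    rw [Real.norm_eq_abs]
    exact key _ _ _ _
  -- summability of shifted products
  have hψshift : ∀ m : ℕ, Summable fun k : ℕ => ψ (m + k) ^ 2 := by
    intro m
    have := (summable_nat_add_iff m).mpr hψsum
    simpa [add_comm] using this
  have hSum : Summable fun k : ℕ => ψ (x + k) * ψ (y + k) := by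
    apply Summable.of_abs
    refine Summable.of_nonneg_of_le (fun k => abs_nonneg _) (fun k => ?_)
      (((hψshift x).add (hψshift y)).mul_left (1/2 : ℝ))
    exact hprod _ _
  have hPart : Tendsto (fun n => ∑ k ∈ Finset.range n, ψ (x + k) * ψ (y + k)) atTop
      (nhds (∑' k : ℕ, ψ (x + k) * ψ (y + k))) :=
    hSum.hasSum.tendsto_sum_nat
  -- take the limit in the telescoped identity
  have hNval : A x * B y - A y * B x
      = -(((x : ℝ) - y) * lam * ∑' k : ℕ, ψ (x + k) * ψ (y + k)) := by
    have hlim : Tendsto (fun n : ℕ =>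
        (A (x + n) * B (y + n) - A (y + n) * B (x + n))
          - ((x : ℝ) - y) * lam * ∑ k ∈ Finset.range n, ψ (x + k) * ψ (y + k))
        atTop (nhds (0 - ((x : ℝ) - y) * lam * ∑' k : ℕ, ψ (x + k) * ψ (y + k))) := by
      exact hNlim.sub ((hPart.const_mul _))
    have hconst : Tendsto (fun _ : ℕ => A x * B y - A y * B x) atTop
        (nhds (A x * B y - A y * B x)) := tendsto_const_nhds
    have := tendsto_nhds_unique
      (hconst.congr (fun n => (hTel x y hxy n)))
      hlim
    rw [this]; ring
  -- compute the tsum in the goal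
  have htsum : (∑' k : ℕ, (Real.sqrt |lam| * (α * A (x + k) + β * B (x + k)))
      * (Real.sqrt |lam| * (α * A (y + k) + β * B (y + k))))
      = |lam| * ∑' k : ℕ, ψ (x + k) * ψ (y + k) := by
    rw [← tsum_mul_left]
    congr 1
    funext k
    have : Real.sqrt |lam| * Real.sqrt |lam| = |lam| := Real.mul_self_sqrt (abs_nonneg _)
    simp only [hψdef]
    linear_combination (α * A (x + k) + β * B (x + k)) * (α * A (y + k) + β * B (y + k)) * this
  have hsign : Real.sign lam * |lam| = lam := by
    rcases lt_or_gt_of_ne hlam with h | h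
    · rw [Real.sign_of_neg h, abs_of_neg h]; ring
    · rw [Real.sign_of_pos h, abs_of_pos h]; ring
  rw [hK x y hxy, hNval, htsum, mul_assoc, neg_div, mul_div_cancel_left₀ _ hxyr]
  linear_combination (∑' k : ℕ, ψ (x + k) * ψ (y + k)) * hsign
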